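/- There exists an absolute constant α > 0 such that the following holds for every real c ≥ 1 and every positive integer n: if P is a nonempty property of n×n black-white images such that every image in P has a c-sparse boundary (at most cn boundary pixels), then for every ε ∈ (0,1), every image I ∈ P, and every image I' obtained from I by at most (α·ε²/c²)·n² basic moves, I' is ε-close to P in normalized Hamming distance. -/

import Mathlib

/-- A basic move on an `n×n` image: swap two adjacent rows or two adjacent columns. -/
def ImgMove {n : ℕ} {α : Type} (I I' : Fin n → Fin n → α) : Prop :=
  ∃ (x : Fin n) (h : x.val + 1 < n),
    I' = (fun i j => I (Equiv.swap x ⟨x.val + 1, h⟩ i) j) ∨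
    I' = (fun i j => I i (Equiv.swap x ⟨x.val + 1, h⟩ j))

/-- `MovesN R m a b`: `b` is obtained from `a` by exactly `m` `R`-steps. -/
def MovesN {β : Type} (R : β → β → Prop) : ℕ → β → β → Prop
  | 0 => fun a b => a = b
  | m + 1 => fun a c => ∃ b, R a b ∧ MovesN R m b c

/-- Normalized Hamming distance between two `n×n` images. -/
noncomputable def dHamImg {n : ℕ} {α : Type} (I I' : Fin n → Fin n → α) : ℝ :=
  (Nat.card {p : Fin n × Fin n // I p.1 p.2 ≠ I' p.1 p.2} : ℝ) / (n ^ 2)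

/-- Two pixels are neighbors if they agree in one coordinate and differ by exactly `1`
in the other. -/
def Nbr {n : ℕ} (P Q : Fin n × Fin n) : Prop :=
  (P.1 = Q.1 ∧ (P.2.val + 1 = Q.2.val ∨ Q.2.val + 1 = P.2.val)) ∨
  (P.2 = Q.2 ∧ (P.1.val + 1 = Q.1.val ∨ Q.1.val + 1 = P.1.val))

/-- The boundary of a black-white image (`true` = black, `false` = white): the set of
black pixels having a white neighbor. -/
def boundary {n : ℕ} (I : Fin n → Fin n → Bool) : Set (Fin n × Fin n) :=
  {P | I P.1 P.2 = true ∧ ∃ Q, Nbr P Q ∧ I Q.1 Q.2 = false}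

lemma exists_adj {f : ℕ → Bool} {a b : ℕ} (hab : a ≤ b) (h : f a ≠ f b) :
    ∃ k, a ≤ k ∧ k + 1 ≤ b ∧ f k ≠ f (k + 1) := by
  induction b, hab using Nat.le_induction with
  | base => exact absurd rfl h
  | succ b hab ih =>
    by_cases hfb : f a = f b
    · exact ⟨b, hab, le_refl _, fun hh => h (hfb.trans hh)⟩
    · obtain ⟨k, h1, h2, h3⟩ := ih hfb
      exact ⟨k, h1, h2.trans (Nat.le_succ b), h3⟩

lemma cross_vert_aux {n : ℕ} (I : Fin n → Fin n → Bool) (j a b : Fin n)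
    (hab : a.val ≤ b.val) (h : I a j ≠ I b j) :
    ∃ r : Fin n, a.val ≤ r.val ∧ r.val ≤ b.val ∧ (r, j) ∈ boundary I := by
  set f : ℕ → Bool := fun k => if hk : k < n then I ⟨k, hk⟩ j else true with hf
  have hfa : f a.val = I a j := by simp [hf, a.isLt]
  have hfb : f b.val = I b j := by simp [hf, b.isLt]
  obtain ⟨k, h1, h2, h3⟩ := exists_adj (f := f) hab (by rw [hfa, hfb]; exact h)
  have hk1 : k + 1 < n := lt_of_le_of_lt h2 b.isLt
  have hk : k < n := Nat.lt_of_succ_lt hk1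
  rw [show f k = I ⟨k, hk⟩ j from by simp [hf, hk],
      show f (k + 1) = I ⟨k + 1, hk1⟩ j from by simp [hf, hk1]] at h3
  set u : Fin n := ⟨k, hk⟩ with hu'
  set v : Fin n := ⟨k + 1, hk1⟩ with hv'
  have hnbr1 : Nbr (u, j) (v, j) := Or.inr ⟨rfl, Or.inl rfl⟩
  have hnbr2 : Nbr (v, j) (u, j) := Or.inr ⟨rfl, Or.inr rfl⟩
  cases hu : I u j with
  | true =>
      refine ⟨u, h1, (Nat.le_succ k).trans h2, hu, (v, j), hnbr1, ?_⟩
      revert h3; cases hI : I v j <;> simp [hu, hI]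
  | false =>
      refine ⟨v, h1.trans (Nat.le_succ k), h2, ?_, (u, j), hnbr2, hu⟩
      revert h3; cases hI : I v j <;> simp [hu, hI]

lemma cross_vert {n : ℕ} (I : Fin n → Fin n → Bool) (j a b : Fin n)
    (h : I a j ≠ I b j) :
    ∃ r : Fin n, Nat.dist a.val r.val ≤ Nat.dist a.val b.val ∧ (r, j) ∈ boundary I := by
  rcases le_total a.val b.val with hab | hab
  · obtain ⟨r, h1, h2, h3⟩ := cross_vert_aux I j a b hab h
    exact ⟨r, by simp [Nat.dist]; omega, h3⟩
  · obtain ⟨r, h1, h2, h3⟩ := cross_vert_aux I j b a hab (Ne.symm h)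
    exact ⟨r, by simp [Nat.dist]; omega, h3⟩

lemma cross_horiz_aux {n : ℕ} (I : Fin n → Fin n → Bool) (i a b : Fin n)
    (hab : a.val ≤ b.val) (h : I i a ≠ I i b) :
    ∃ r : Fin n, a.val ≤ r.val ∧ r.val ≤ b.val ∧ (i, r) ∈ boundary I := by
  set f : ℕ → Bool := fun k => if hk : k < n then I i ⟨k, hk⟩ else true with hf
  have hfa : f a.val = I i a := by simp [hf, a.isLt]
  have hfb : f b.val = I i b := by simp [hf, b.isLt]
  obtain ⟨k, h1, h2, h3⟩ := exists_adj (f := f) hab (by rw [hfa, hfb]; exact h)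
  have hk1 : k + 1 < n := lt_of_le_of_lt h2 b.isLt
  have hk : k < n := Nat.lt_of_succ_lt hk1
  rw [show f k = I i ⟨k, hk⟩ from by simp [hf, hk],
      show f (k + 1) = I i ⟨k + 1, hk1⟩ from by simp [hf, hk1]] at h3
  set u : Fin n := ⟨k, hk⟩ with hu'
  set v : Fin n := ⟨k + 1, hk1⟩ with hv'
  have hnbr1 : Nbr (i, u) (i, v) := Or.inl ⟨rfl, Or.inl rfl⟩
  have hnbr2 : Nbr (i, v) (i, u) := Or.inl ⟨rfl, Or.inr rfl⟩
  cases hu : I i u with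
  | true =>
      refine ⟨u, h1, (Nat.le_succ k).trans h2, hu, (i, v), hnbr1, ?_⟩
      revert h3; cases hI : I i v <;> simp [hu, hI]
  | false =>
      refine ⟨v, h1.trans (Nat.le_succ k), h2, ?_, (i, u), hnbr2, hu⟩
      revert h3; cases hI : I i v <;> simp [hu, hI]

lemma cross_horiz {n : ℕ} (I : Fin n → Fin n → Bool) (i a b : Fin n)
    (h : I i a ≠ I i b) :
    ∃ r : Fin n, Nat.dist a.val r.val ≤ Nat.dist a.val b.val ∧ (i, r) ∈ boundary I := by
  rcases le_total a.val b.val with hab | hab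
  · obtain ⟨r, h1, h2, h3⟩ := cross_horiz_aux I i a b hab h
    exact ⟨r, by simp [Nat.dist]; omega, h3⟩
  · obtain ⟨r, h1, h2, h3⟩ := cross_horiz_aux I i b a hab (Ne.symm h)
    exact ⟨r, by simp [Nat.dist]; omega, h3⟩


def dispP {n : ℕ} (σ : Equiv.Perm (Fin n)) : ℕ := ∑ i, Nat.dist (σ i).val i.val

lemma swap_dist_le {n : ℕ} (x y : Fin n) (hxy : Nat.dist x.val y.val ≤ 1) (z : Fin n) :
    Nat.dist ((Equiv.swap x y) z).val z.val ≤
      (if z = x then 1 else 0) + (if z = y then 1 else 0) := by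
  rcases eq_or_ne z x with h | h
  · subst h
    rw [Equiv.swap_apply_left, if_pos rfl]
    have : Nat.dist y.val z.val ≤ 1 := by rw [Nat.dist_comm]; exact hxy
    exact this.trans (by omega)
  · rcases eq_or_ne z y with h' | h'
    · subst h'
      rw [Equiv.swap_apply_right, if_neg h, if_pos rfl]
      exact hxy.trans (by omega)
    · rw [Equiv.swap_apply_of_ne_of_ne h h', if_neg h, if_neg h', Nat.dist_self]

lemma disp_trans_swap {n : ℕ} (σ : Equiv.Perm (Fin n)) (x y : Fin n)
    (hxy : Nat.dist x.val y.val ≤ 1) :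
    dispP (σ.trans (Equiv.swap x y)) ≤ dispP σ + 2 := by
  have key : ∀ i : Fin n, Nat.dist ((Equiv.swap x y) (σ i)).val i.val ≤
      Nat.dist (σ i).val i.val + ((if σ i = x then 1 else 0) + (if σ i = y then 1 else 0)) := by
    intro i
    have tri := Nat.dist.triangle_inequality ((Equiv.swap x y) (σ i)).val (σ i).val i.val
    have hb := swap_dist_le x y hxy (σ i)
    have := Nat.dist_comm ((Equiv.swap x y) (σ i)).val (σ i).val
    linarith [tri, hb]
  have e1 : (∑ i : Fin n, if σ i = x then (1:ℕ) else 0) = 1 := by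
    rw [Equiv.sum_comp σ (fun z => if z = x then (1:ℕ) else 0)]
    simp
  have e2 : (∑ i : Fin n, if σ i = y then (1:ℕ) else 0) = 1 := by
    rw [Equiv.sum_comp σ (fun z => if z = y then (1:ℕ) else 0)]
    simp
  calc dispP (σ.trans (Equiv.swap x y))
      = ∑ i : Fin n, Nat.dist ((Equiv.swap x y) (σ i)).val i.val := rfl
    _ ≤ ∑ i : Fin n, (Nat.dist (σ i).val i.val +
          ((if σ i = x then 1 else 0) + (if σ i = y then 1 else 0))) :=
        Finset.sum_le_sum (fun i _ => key i)
    _ = dispP σ + ((∑ i : Fin n, if σ i = x then 1 else 0) +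
          (∑ i : Fin n, if σ i = y then 1 else 0)) := by
        rw [Finset.sum_add_distrib, Finset.sum_add_distrib]; rfl
    _ ≤ dispP σ + 2 := by rw [e1, e2]

lemma movesN_decomp {n : ℕ} (m : ℕ) (I I' : Fin n → Fin n → Bool)
    (h : MovesN ImgMove m I I') :
    ∃ σ τ : Equiv.Perm (Fin n), I' = (fun i j => I (σ i) (τ j)) ∧
      dispP σ + dispP τ ≤ 2 * m := by
  induction m generalizing I with
  | zero =>
      refine ⟨1, 1, ?_, by simp [dispP, Nat.dist_self]⟩
      have : I = I' := h
      subst this; rfl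
  | succ m ih =>
      obtain ⟨b, hIb, hb⟩ := h
      obtain ⟨σ, τ, hE, hd⟩ := ih b hb
      obtain ⟨x, hx, hcase⟩ := hIb
      set x' : Fin n := ⟨x.val + 1, hx⟩ with hx'
      have hdist : Nat.dist x.val x'.val ≤ 1 := by simp [hx', Nat.dist]
      rcases hcase with hrow | hcol
      · refine ⟨σ.trans (Equiv.swap x x'), τ, ?_, ?_⟩
        · funext i j
          rw [hE, hrow]; rfl
        · have := disp_trans_swap σ x x' hdist
          omega
      · refine ⟨σ, τ.trans (Equiv.swap x x'), ?_, ?_⟩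
        · funext i j
          rw [hE, hcol]; rfl
        · have := disp_trans_swap τ x x' hdist
          omega

open Finset in
lemma count_main {n : ℕ} (I : Fin n → Fin n → Bool) (σ τ : Equiv.Perm (Fin n)) (D : ℕ)
    (B : Finset (Fin n × Fin n)) (hB : ∀ p ∈ boundary I, p ∈ B) :
    (univ.filter (fun p : Fin n × Fin n => I p.1 p.2 ≠ I (σ p.1) (τ p.2))).card * (D + 1)
      ≤ (dispP σ + dispP τ) * n + B.card * (4 * D + 2) * (D + 1) := by
  classical
  set A := univ.filter (fun p : Fin n × Fin n => I p.1 p.2 ≠ I (σ p.1) (τ p.2)) with hA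
  set FarR := univ.filter (fun i : Fin n => D < Nat.dist (σ i).val i.val) with hFR
  set FarC := univ.filter (fun j : Fin n => D < Nat.dist (τ j).val j.val) with hFC
  set Vb : Fin n × Fin n → Finset (Fin n × Fin n) :=
    fun b => univ.filter (fun p => p.2 = b.2 ∧ Nat.dist p.1.val b.1.val ≤ D) with hVb
  set Hb : Fin n × Fin n → Finset (Fin n × Fin n) :=
    fun b => univ.filter (fun p => σ p.1 = b.1 ∧ Nat.dist p.2.val b.2.val ≤ D) with hHb
  -- cardinality of Vb
  have hVcard : ∀ b, (Vb b).card ≤ 2 * D + 1 := by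
    intro b
    have : (Vb b).card ≤ (Finset.range (2 * D + 1)).card := by
      apply Finset.card_le_card_of_injOn (fun p => p.1.val + D - b.1.val)
      · intro p hp
        simp only [hVb, Finset.mem_coe, mem_filter, mem_univ, true_and] at hp
        have := hp.2
        simp only [Nat.dist] at this
        simp only [Finset.mem_coe, Finset.mem_range]
        omega
      · intro p hp q hq hpq
        simp only [hVb, Finset.coe_filter, Set.mem_setOf_eq, mem_univ, true_and] at hp hq
        have h1 := hp.2; have h2 := hq.2
        simp only [Nat.dist] at h1 h2 hpq
        have : p.1 = q.1 := Fin.ext (by omega)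
        exact Prod.ext this (hp.1.trans hq.1.symm)
    simpa using this
  have hHcard : ∀ b, (Hb b).card ≤ 2 * D + 1 := by
    intro b
    have : (Hb b).card ≤ (Finset.range (2 * D + 1)).card := by
      apply Finset.card_le_card_of_injOn (fun p => p.2.val + D - b.2.val)
      · intro p hp
        simp only [hHb, Finset.mem_coe, mem_filter, mem_univ, true_and] at hp
        have := hp.2
        simp only [Nat.dist] at this
        simp only [Finset.mem_coe, Finset.mem_range]
        omega
      · intro p hp q hq hpq
        simp only [hHb, Finset.coe_filter, Set.mem_setOf_eq, mem_univ, true_and] at hp hq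
        have h1 := hp.2; have h2 := hq.2
        simp only [Nat.dist] at h1 h2 hpq
        have e2 : p.2 = q.2 := Fin.ext (by omega)
        have e1 : p.1 = q.1 := σ.injective (hp.1.trans hq.1.symm)
        exact Prod.ext e1 e2
    simpa using this
  -- inclusion
  have hsub : A ⊆ (FarR ×ˢ univ ∪ univ ×ˢ FarC) ∪ B.biUnion (fun b => Vb b ∪ Hb b) := by
    intro p hp
    simp only [hA, mem_filter, mem_univ, true_and] at hp
    by_cases hfr : D < Nat.dist (σ p.1).val p.1.val
    · apply Finset.mem_union_left
      apply Finset.mem_union_left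
      simp [hFR, Finset.mem_product, hfr]
    · by_cases hfc : D < Nat.dist (τ p.2).val p.2.val
      · apply Finset.mem_union_left
        apply Finset.mem_union_right
        simp [hFC, Finset.mem_product, hfc]
      · push_neg at hfr hfc
        apply Finset.mem_union_right
        by_cases h1 : I p.1 p.2 = I (σ p.1) p.2
        · have h2 : I (σ p.1) p.2 ≠ I (σ p.1) (τ p.2) := fun hh => hp (h1.trans hh)
          obtain ⟨r, hr1, hr2⟩ := cross_horiz I (σ p.1) p.2 (τ p.2) h2
          refine Finset.mem_biUnion.2 ⟨(σ p.1, r), hB _ hr2, Finset.mem_union_right _ ?_⟩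
          simp only [hHb, mem_filter, mem_univ, true_and]
          exact hr1.trans (by rw [Nat.dist_comm] at hfc; exact hfc)
        · obtain ⟨r, hr1, hr2⟩ := cross_vert I p.2 p.1 (σ p.1) h1
          refine Finset.mem_biUnion.2 ⟨(r, p.2), hB _ hr2, Finset.mem_union_left _ ?_⟩
          simp only [hVb, mem_filter, mem_univ, true_and]
          exact hr1.trans (by rw [Nat.dist_comm] at hfr; exact hfr)
  -- far cards
  have hFRcard : FarR.card * (D + 1) ≤ dispP σ := by
    have h1 : FarR.card • (D + 1) ≤ ∑ i ∈ FarR, Nat.dist (σ i).val i.val := by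
      apply Finset.card_nsmul_le_sum
      intro i hi
      simp only [hFR, mem_filter] at hi
      omega
    have h1' : FarR.card * (D + 1) ≤ ∑ i ∈ FarR, Nat.dist (σ i).val i.val := by
      simpa using h1
    exact h1'.trans (Finset.sum_le_sum_of_subset (Finset.subset_univ _))
  have hFCcard : FarC.card * (D + 1) ≤ dispP τ := by
    have h1 : FarC.card • (D + 1) ≤ ∑ j ∈ FarC, Nat.dist (τ j).val j.val := by
      apply Finset.card_nsmul_le_sum
      intro j hj
      simp only [hFC, mem_filter] at hj
      omega
    have h1' : FarC.card * (D + 1) ≤ ∑ j ∈ FarC, Nat.dist (τ j).val j.val := by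
      simpa using h1
    exact h1'.trans (Finset.sum_le_sum_of_subset (Finset.subset_univ _))
  -- assemble
  have hAcard : A.card ≤ (FarR.card + FarC.card) * n + B.card * (4 * D + 2) := by
    calc A.card ≤ ((FarR ×ˢ univ ∪ univ ×ˢ FarC) ∪ B.biUnion (fun b => Vb b ∪ Hb b)).card :=
          Finset.card_le_card hsub
      _ ≤ (FarR ×ˢ univ ∪ univ ×ˢ FarC).card + (B.biUnion (fun b => Vb b ∪ Hb b)).card :=
          Finset.card_union_le _ _
      _ ≤ ((FarR ×ˢ (univ : Finset (Fin n))).card + ((univ : Finset (Fin n)) ×ˢ FarC).card)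
            + (B.biUnion (fun b => Vb b ∪ Hb b)).card := by
          gcongr
          exact Finset.card_union_le _ _
      _ ≤ (FarR.card * n + n * FarC.card) + ∑ b ∈ B, (Vb b ∪ Hb b).card := by
          gcongr
          · rw [Finset.card_product, Finset.card_univ, Fintype.card_fin]
          · rw [Finset.card_product, Finset.card_univ, Fintype.card_fin]
          · exact Finset.card_biUnion_le
      _ ≤ (FarR.card * n + n * FarC.card) + ∑ _b ∈ B, (4 * D + 2) := by
          gcongr with b hb
          calc (Vb b ∪ Hb b).card ≤ (Vb b).card + (Hb b).card := Finset.card_union_le _ _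
            _ ≤ (2 * D + 1) + (2 * D + 1) := Nat.add_le_add (hVcard b) (hHcard b)
            _ = 4 * D + 2 := by ring
      _ = (FarR.card + FarC.card) * n + B.card * (4 * D + 2) := by
          rw [Finset.sum_const, smul_eq_mul]
          ring
  calc A.card * (D + 1) ≤ ((FarR.card + FarC.card) * n + B.card * (4 * D + 2)) * (D + 1) :=
        Nat.mul_le_mul_right _ hAcard
    _ = (FarR.card * (D + 1) + FarC.card * (D + 1)) * n + B.card * (4 * D + 2) * (D + 1) := by
        ring
    _ ≤ (dispP σ + dispP τ) * n + B.card * (4 * D + 2) * (D + 1) :=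
        Nat.add_le_add (Nat.mul_le_mul_right n (Nat.add_le_add hFRcard hFCcard)) le_rfl

lemma arith_final {c ε nR mR s DR K Bc : ℝ}
    (hc : 1 ≤ c) (hn0 : 0 < nR) (hε0 : 0 < ε)
    (hK0 : 0 ≤ K) (hB0 : 0 ≤ Bc) (hBc : Bc ≤ c * nR)
    (hss : s * s = mR) (hs1 : 1 ≤ s) (hDle : DR ≤ s) (hsD : s ≤ DR + 1) (hD0 : 0 ≤ DR)
    (hm : mR ≤ 1 / 64 * ε ^ 2 / c ^ 2 * nR ^ 2)
    (key : K * (DR + 1) ≤ 2 * mR * nR + Bc * (4 * DR + 2) * (DR + 1)) :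
    K ≤ ε * nR ^ 2 := by
  have hc0 : (0:ℝ) < c := lt_of_lt_of_le one_pos hc
  have hs0 : (0:ℝ) ≤ s := le_trans zero_le_one hs1
  have hsε : 8 * c * s ≤ ε * nR := by
    have h1 : mR ≤ (ε * nR / (8 * c)) ^ 2 := by
      calc mR ≤ 1 / 64 * ε ^ 2 / c ^ 2 * nR ^ 2 := hm
        _ = (ε * nR / (8 * c)) ^ 2 := by field_simp; ring
    have ht0 : 0 ≤ ε * nR / (8 * c) := by positivity
    have h2 : s ≤ ε * nR / (8 * c) := by
      by_contra hgt
      push_neg at hgt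
      nlinarith
    calc 8 * c * s ≤ 8 * c * (ε * nR / (8 * c)) :=
          mul_le_mul_of_nonneg_left h2 (by linarith)
      _ = ε * nR := by field_simp
  have hb2 : (4 * DR + 2) ≤ 6 * s := by nlinarith
  have e1 : 2 * mR * nR ≤ 2 * s * (DR + 1) * nR := by
    have h5 : s * s ≤ s * (DR + 1) := mul_le_mul_of_nonneg_left hsD hs0
    have h6 : s * s * nR ≤ s * (DR + 1) * nR := mul_le_mul_of_nonneg_right h5 hn0.le
    rw [← hss]
    nlinarith
  have e2 : Bc * (4 * DR + 2) * (DR + 1) ≤ (c * nR) * (6 * s) * (DR + 1) := by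
    gcongr
  have hKf : K * (DR + 1) ≤ (2 * s * nR + c * nR * (6 * s)) * (DR + 1) := by
    calc K * (DR + 1) ≤ 2 * mR * nR + Bc * (4 * DR + 2) * (DR + 1) := key
      _ ≤ 2 * s * (DR + 1) * nR + (c * nR) * (6 * s) * (DR + 1) := by linarith
      _ = (2 * s * nR + c * nR * (6 * s)) * (DR + 1) := by ring
  have hK : K ≤ 2 * s * nR + c * nR * (6 * s) :=
    le_of_mul_le_mul_right hKf (by linarith)
  calc K ≤ 2 * s * nR + c * nR * (6 * s) := hK
    _ ≤ 8 * c * s * nR := by nlinarith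
    _ ≤ ε * nR * nR := by nlinarith
    _ = ε * nR ^ 2 := by ring

theorem stmt9 :
    ∃ α : ℝ, 0 < α ∧ ∀ c : ℝ, 1 ≤ c → ∀ n : ℕ, 0 < n →
      ∀ P : Set (Fin n → Fin n → Bool), P.Nonempty →
      (∀ I ∈ P, ((boundary I).ncard : ℝ) ≤ c * n) →
      ∀ ε : ℝ, 0 < ε → ε < 1 → ∀ I ∈ P, ∀ I' : Fin n → Fin n → Bool,
        (∃ m : ℕ, (m : ℝ) ≤ α * ε ^ 2 / c ^ 2 * n ^ 2 ∧ MovesN ImgMove m I I') →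
        ∃ J ∈ P, dHamImg I' J ≤ ε := by
  classical
  refine ⟨1/64, by norm_num, ?_⟩
  intro c hc n hn P hPne hPb ε hε0 hε1 I hI I' ⟨m, hm, hmoves⟩
  refine ⟨I, hI, ?_⟩
  have hc0 : (0:ℝ) < c := lt_of_lt_of_le one_pos hc
  have hn0 : (0:ℝ) < n := Nat.cast_pos.2 hn
  rcases Nat.eq_zero_or_pos m with hm0 | hm1
  · subst hm0
    have hII : I = I' := hmoves
    subst hII
    have : dHamImg I I = 0 := by
      unfold dHamImg
      rw [Nat.card_eq_fintype_card, Fintype.card_subtype]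
      simp
    rw [this]; linarith
  -- main case
  obtain ⟨σ, τ, hE, hdisp⟩ := movesN_decomp m I I' hmoves
  set D := Nat.sqrt m with hD
  set B := (Set.toFinite (boundary I)).toFinset with hBdef
  have hBmem : ∀ p ∈ boundary I, p ∈ B := by
    intro p hp; rw [hBdef, Set.Finite.mem_toFinset]; exact hp
  have hBcard : (B.card : ℝ) ≤ c * n := by
    rw [hBdef, ← Set.ncard_eq_toFinset_card (boundary I)]
    exact hPb I hI
  have key := count_main I σ τ D B hBmem
  set A := Finset.univ.filter (fun p : Fin n × Fin n => I p.1 p.2 ≠ I (σ p.1) (τ p.2)) with hA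
  have key2 : A.card * (D + 1) ≤ 2 * m * n + B.card * (4 * D + 2) * (D + 1) := by
    calc A.card * (D + 1) ≤ (dispP σ + dispP τ) * n + B.card * (4 * D + 2) * (D + 1) := key
      _ ≤ 2 * m * n + B.card * (4 * D + 2) * (D + 1) := by
          have := Nat.mul_le_mul_right n hdisp
          omega
  -- identify Hamming count
  have hcount : dHamImg I' I = (A.card : ℝ) / (n ^ 2) := by
    unfold dHamImg
    congr 1
    rw [Nat.card_eq_fintype_card, Fintype.card_subtype]
    norm_cast
    congr 1
    apply Finset.filter_congr
    intro p _
    rw [hE]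
    simp [ne_comm]
  rw [hcount]
  rw [div_le_iff₀ (by positivity)]
  -- real arithmetic
  set s := Real.sqrt m with hs
  have hs0 : (0:ℝ) ≤ s := Real.sqrt_nonneg _
  have hss : s * s = (m:ℝ) := Real.mul_self_sqrt (by positivity)
  have hm1' : (1:ℝ) ≤ (m:ℝ) := by exact_mod_cast hm1
  have hs1 : (1:ℝ) ≤ s := by nlinarith
  have hDle : ((D:ℝ)) ≤ s := by
    have h1 : (D:ℝ) ^ 2 ≤ (m:ℝ) := by exact_mod_cast Nat.sqrt_le' m
    nlinarith
  have hsD : s ≤ (D:ℝ) + 1 := by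
    have h3 : m ≤ (D + 1) ^ 2 := le_of_lt (Nat.lt_succ_sqrt' m)
    have h4 : (m:ℝ) ≤ ((D:ℝ) + 1) ^ 2 := by exact_mod_cast h3
    nlinarith
  have hD0 : (0:ℝ) ≤ (D:ℝ) := Nat.cast_nonneg _
  have keyR : (A.card : ℝ) * ((D:ℝ) + 1) ≤
      2 * (m:ℝ) * (n:ℝ) + (B.card:ℝ) * (4 * (D:ℝ) + 2) * ((D:ℝ) + 1) := by
    exact_mod_cast key2
  exact arith_final hc hn0 hε0 (Nat.cast_nonneg _) (Nat.cast_nonneg _) hBcard hss hs1 hDle hsD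
    hD0 hm keyR
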